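/- Let Q be a symmetric positive definite d×d real matrix and define V(x) := (xᵀQx)^{m/2}. Then for every δ > 0 there exists a constant κ₂ > 0 such that for every u ∈ 𝒮 and every x ∈ ℝ^d with |x| ≥ 1 and δ|x| < (e·x)⁺ one has ∇V(x)·b(x,u) ≤ κ₂(1 + [(e·x)⁺]^m). -/

import Mathlib

set_option autoImplicit false
set_option maxHeartbeats 1000000

open Matrix Set

noncomputable section

abbrev EucSp (d : ℕ) := EuclideanSpace ℝ (Fin d)

/-- The probability simplex in `ℝ^d`. -/
def simplex (d : ℕ) : Set (EucSp d) := {u | (∀ i, 0 ≤ u i) ∧ (∑ i, u i) = 1}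

/-- First partial derivative `∂f/∂xᵢ`. -/
noncomputable def pd1 {d : ℕ} (f : EucSp d → ℝ) (i : Fin d) (x : EucSp d) : ℝ :=
  fderiv ℝ f x (EuclideanSpace.single i 1)

/-- The piecewise linear drift `b(x,u) = ℓ − R(x − (e·x)⁺u) − (e·x)⁺Γu`. -/
noncomputable def qdrift {d : ℕ} (ℓ : EucSp d) (R Γ : Matrix (Fin d) (Fin d) ℝ)
    (x u : EucSp d) (i : Fin d) : ℝ :=
  ℓ i - R.mulVec (fun j => x j - max (∑ k, x k) 0 * u j) i
    - max (∑ k, x k) 0 * Γ.mulVec u i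

/-- The quadratic form `xᵀQx`. -/
def quadForm {d : ℕ} (Q : Matrix (Fin d) (Fin d) ℝ) (x : EucSp d) : ℝ :=
  ∑ i, ∑ j, x i * (Q i j * x j)

/-- The Lyapunov candidate `V(x) = (xᵀQx)^{m/2}`. -/
noncomputable def Vq {d : ℕ} (Q : Matrix (Fin d) (Fin d) ℝ) (m : ℝ) (x : EucSp d) : ℝ :=
  quadForm Q x ^ (m / 2)

-- auxiliary lemmas

lemma abs_apply_le_norm {d : ℕ} (x : EucSp d) (i : Fin d) : |x i| ≤ ‖x‖ := by
  rw [EuclideanSpace.norm_eq, ← Real.sqrt_sq_eq_abs]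
  apply Real.sqrt_le_sqrt
  have : |x i| ^ 2 ≤ ∑ j, ‖x j‖ ^ 2 := by
    simpa [Real.norm_eq_abs] using
      Finset.single_le_sum (f := fun j => |x j| ^ 2) (fun j _ => sq_nonneg _) (Finset.mem_univ i)
  simpa [sq_abs] using this

lemma quadForm_smul {d : ℕ} (Q : Matrix (Fin d) (Fin d) ℝ) (a : ℝ) (x : EucSp d) :
    quadForm Q (a • x) = a ^ 2 * quadForm Q x := by
  simp only [quadForm, Finset.mul_sum, PiLp.smul_apply, smul_eq_mul]
  refine Finset.sum_congr rfl fun i _ => Finset.sum_congr rfl fun j _ => by ring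

lemma quadForm_continuous {d : ℕ} (Q : Matrix (Fin d) (Fin d) ℝ) :
    Continuous (quadForm Q) := by
  unfold quadForm
  fun_prop

lemma quadForm_lower {d : ℕ} (hd : 1 ≤ d) (Q : Matrix (Fin d) (Fin d) ℝ) (hQpos : Q.PosDef) :
    ∃ c : ℝ, 0 < c ∧ ∀ x : EucSp d, c * ‖x‖ ^ 2 ≤ quadForm Q x := by
  have hne : (Metric.sphere (0 : EucSp d) 1).Nonempty := by
    refine ⟨EuclideanSpace.single ⟨0, hd⟩ 1, ?_⟩
    simp [EuclideanSpace.norm_single]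
  obtain ⟨z, hz, hmin'⟩ := (isCompact_sphere (0 : EucSp d) 1).exists_isMinOn hne
    (quadForm_continuous Q).continuousOn
  have hmin : ∀ y ∈ Metric.sphere (0 : EucSp d) 1, quadForm Q z ≤ quadForm Q y :=
    fun y hy => hmin' hy
  have hz1 : ‖z‖ = 1 := by simpa using hz
  have hzne : z ≠ 0 := by intro h; rw [h] at hz1; simp at hz1
  have hq : ∀ y : EucSp d, quadForm Q y = y ⬝ᵥ Q.mulVec y := by
    intro y
    simp [quadForm, dotProduct, Matrix.mulVec, Finset.mul_sum]
  have hcz : 0 < quadForm Q z := by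
    rw [hq]; simpa using hQpos.dotProduct_mulVec_pos (x := z.ofLp) (by simpa using hzne)
  refine ⟨quadForm Q z, hcz, fun x => ?_⟩
  rcases eq_or_ne x 0 with rfl | hx
  · simp [quadForm]
  · have hnx : 0 < ‖x‖ := norm_pos_iff.mpr hx
    have hy : (‖x‖⁻¹ • x) ∈ Metric.sphere (0 : EucSp d) 1 := by
      simp [norm_smul, abs_of_pos (inv_pos.mpr hnx), inv_mul_cancel₀ hnx.ne']
    have := hmin _ hy
    have heq : quadForm Q (‖x‖⁻¹ • x) = ‖x‖⁻¹ ^ 2 * quadForm Q x := quadForm_smul Q _ x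
    rw [heq] at this
    have h2 : quadForm Q z * ‖x‖ ^ 2 ≤ (‖x‖⁻¹ ^ 2 * quadForm Q x) * ‖x‖ ^ 2 :=
      mul_le_mul_of_nonneg_right this (by positivity)
    calc quadForm Q z * ‖x‖ ^ 2 ≤ (‖x‖⁻¹ ^ 2 * quadForm Q x) * ‖x‖ ^ 2 := h2
    _ = quadForm Q x := by field_simp

noncomputable def qderiv {d : ℕ} (Q : Matrix (Fin d) (Fin d) ℝ) (x : EucSp d) :
    EucSp d →L[ℝ] ℝ :=
  ∑ i, ∑ j, ((x i • (Q i j • (EuclideanSpace.proj j : EucSp d →L[ℝ] ℝ)))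
    + (Q i j * x j) • (EuclideanSpace.proj i : EucSp d →L[ℝ] ℝ))

lemma quadForm_hasFDerivAt {d : ℕ} (Q : Matrix (Fin d) (Fin d) ℝ) (x : EucSp d) :
    HasFDerivAt (quadForm Q) (qderiv Q x) x := by
  have h : ∀ i j : Fin d, HasFDerivAt (fun y : EucSp d => y i * (Q i j * y j))
      ((x i • (Q i j • (EuclideanSpace.proj j : EucSp d →L[ℝ] ℝ)))
        + (Q i j * x j) • (EuclideanSpace.proj i : EucSp d →L[ℝ] ℝ)) x := by
    intro i j
    have hi : HasFDerivAt (fun y : EucSp d => y i)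
        (EuclideanSpace.proj i : EucSp d →L[ℝ] ℝ) x :=
      (EuclideanSpace.proj i : EucSp d →L[ℝ] ℝ).hasFDerivAt
    have hj : HasFDerivAt (fun y : EucSp d => Q i j * y j)
        (Q i j • (EuclideanSpace.proj j : EucSp d →L[ℝ] ℝ)) x := by
      simpa using ((EuclideanSpace.proj j : EucSp d →L[ℝ] ℝ).hasFDerivAt.const_mul (Q i j))
    exact hi.mul hj
  have h2 : ∀ i : Fin d, HasFDerivAt (fun y : EucSp d => ∑ j, y i * (Q i j * y j))
      (∑ j, ((x i • (Q i j • (EuclideanSpace.proj j : EucSp d →L[ℝ] ℝ)))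
        + (Q i j * x j) • (EuclideanSpace.proj i : EucSp d →L[ℝ] ℝ))) x :=
    fun i => HasFDerivAt.fun_sum (fun j _ => h i j)
  exact HasFDerivAt.fun_sum (fun i _ => h2 i)


lemma qderiv_single {d : ℕ} (Q : Matrix (Fin d) (Fin d) ℝ) (x : EucSp d) (i : Fin d) :
    qderiv Q x (EuclideanSpace.single i 1) = ∑ j, (Q i j * x j + x j * Q j i) := by
  simp only [qderiv, ContinuousLinearMap.sum_apply, ContinuousLinearMap.add_apply,
    ContinuousLinearMap.smul_apply, smul_eq_mul, PiLp.proj_apply,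
    EuclideanSpace.single_apply, mul_ite, mul_one, mul_zero]
  simp only [← Finset.sum_ite_eq' Finset.univ i, Finset.sum_add_distrib,
    Finset.sum_ite_eq', Finset.mem_univ, if_true]
  rw [Finset.sum_comm]
  simp only [Finset.sum_ite_eq', Finset.mem_univ, if_true]
  rw [add_comm]

lemma Vq_hasFDerivAt {d : ℕ} (Q : Matrix (Fin d) (Fin d) ℝ) (m : ℝ) (x : EucSp d)
    (hq : quadForm Q x ≠ 0) :
    HasFDerivAt (Vq Q m) ((m / 2 * quadForm Q x ^ (m / 2 - 1)) • qderiv Q x) x :=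
  (Real.hasDerivAt_rpow_const (p := m / 2) (Or.inl hq)).comp_hasFDerivAt x
    (quadForm_hasFDerivAt Q x)

lemma pd1_Vq {d : ℕ} (Q : Matrix (Fin d) (Fin d) ℝ) (m : ℝ) (x : EucSp d)
    (hq : quadForm Q x ≠ 0) (i : Fin d) :
    pd1 (Vq Q m) i x
      = (m / 2 * quadForm Q x ^ (m / 2 - 1)) * qderiv Q x (EuclideanSpace.single i 1) := by
  rw [pd1, (Vq_hasFDerivAt Q m x hq).fderiv]
  simp

lemma sum_le_card_norm {d : ℕ} (x : EucSp d) : max (∑ k, x k) 0 ≤ d * ‖x‖ := by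
  apply max_le
  · calc ∑ k, x k ≤ ∑ k, |x k| := Finset.sum_le_sum (fun k _ => le_abs_self _)
      _ ≤ ∑ _k : Fin d, ‖x‖ := Finset.sum_le_sum (fun k _ => abs_apply_le_norm x k)
      _ = d * ‖x‖ := by simp [Finset.sum_const, nsmul_eq_mul]
  · positivity

lemma qdrift_bound {d : ℕ} (ℓ : EucSp d) (R Γ : Matrix (Fin d) (Fin d) ℝ)
    (u x : EucSp d) (hu : u ∈ simplex d) (hx : 1 ≤ ‖x‖) (i : Fin d) :
    |qdrift ℓ R Γ x u i|
      ≤ (|ℓ i| + (1 + d) * (∑ j, |R i j|) + d * (∑ j, |Γ i j|)) * ‖x‖ := by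
  obtain ⟨hu0, hu1⟩ := hu
  have hnx : (0:ℝ) < ‖x‖ := lt_of_lt_of_le one_pos hx
  set s := max (∑ k, x k) 0 with hsdef
  have hs0 : 0 ≤ s := le_max_right _ _
  have hsle : s ≤ d * ‖x‖ := sum_le_card_norm x
  have huj : ∀ j, u j ≤ 1 := fun j => by
    calc u j ≤ ∑ k, u k := Finset.single_le_sum (fun k _ => hu0 k) (Finset.mem_univ j)
    _ = 1 := hu1
  have h1 : |qdrift ℓ R Γ x u i|
      ≤ |ℓ i| + |∑ j, R i j * (x j - s * u j)| + |s * ∑ j, Γ i j * u j| := by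
    rw [qdrift]
    simp only [Matrix.mulVec, dotProduct, ← hsdef]
    calc |ℓ i - (∑ j, R i j * (x j - s * u j)) - s * ∑ j, Γ i j * u j|
        ≤ |ℓ i - ∑ j, R i j * (x j - s * u j)| + |s * ∑ j, Γ i j * u j| := abs_sub _ _
      _ ≤ |ℓ i| + |∑ j, R i j * (x j - s * u j)| + |s * ∑ j, Γ i j * u j| := by
          have := abs_sub (ℓ i) (∑ j, R i j * (x j - s * u j))
          linarith
  have h2 : |∑ j, R i j * (x j - s * u j)| ≤ (∑ j, |R i j|) * ((1 + d) * ‖x‖) := by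
    calc |∑ j, R i j * (x j - s * u j)| ≤ ∑ j, |R i j * (x j - s * u j)| :=
          Finset.abs_sum_le_sum_abs _ _
      _ = ∑ j, |R i j| * |x j - s * u j| := by simp [abs_mul]
      _ ≤ ∑ j, |R i j| * ((1 + d) * ‖x‖) := by
          refine Finset.sum_le_sum fun j _ => mul_le_mul_of_nonneg_left ?_ (abs_nonneg _)
          have h3 := abs_sub (x j) (s * u j)
          have h4 : |x j| ≤ ‖x‖ := abs_apply_le_norm x j
          have h5 : |s * u j| ≤ d * ‖x‖ := by
            rw [abs_of_nonneg (mul_nonneg hs0 (hu0 j))]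
            calc s * u j ≤ s * 1 := mul_le_mul_of_nonneg_left (huj j) hs0
              _ = s := mul_one s
              _ ≤ d * ‖x‖ := hsle
          nlinarith
      _ = (∑ j, |R i j|) * ((1 + d) * ‖x‖) := by rw [← Finset.sum_mul]
  have h3 : |s * ∑ j, Γ i j * u j| ≤ (d * ‖x‖) * (∑ j, |Γ i j|) := by
    rw [abs_mul, abs_of_nonneg hs0]
    have hΓ : |∑ j, Γ i j * u j| ≤ ∑ j, |Γ i j| := by
      calc |∑ j, Γ i j * u j| ≤ ∑ j, |Γ i j * u j| := Finset.abs_sum_le_sum_abs _ _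
        _ ≤ ∑ j, |Γ i j| := by
            refine Finset.sum_le_sum fun j _ => ?_
            rw [abs_mul, abs_of_nonneg (hu0 j)]
            calc |Γ i j| * u j ≤ |Γ i j| * 1 :=
                  mul_le_mul_of_nonneg_left (huj j) (abs_nonneg _)
              _ = |Γ i j| := mul_one _
    have hΓ0 : (0:ℝ) ≤ ∑ j, |Γ i j| := Finset.sum_nonneg fun j _ => abs_nonneg _
    calc s * |∑ j, Γ i j * u j| ≤ s * ∑ j, |Γ i j| :=
          mul_le_mul_of_nonneg_left hΓ hs0
      _ ≤ (d * ‖x‖) * ∑ j, |Γ i j| := mul_le_mul_of_nonneg_right hsle hΓ0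
  have hR0 : (0:ℝ) ≤ ∑ j, |R i j| := Finset.sum_nonneg fun j _ => abs_nonneg _
  have hΓ0 : (0:ℝ) ≤ ∑ j, |Γ i j| := Finset.sum_nonneg fun j _ => abs_nonneg _
  have hl : |ℓ i| ≤ |ℓ i| * ‖x‖ := le_mul_of_one_le_right (abs_nonneg _) hx
  nlinarith [abs_nonneg (ℓ i)]

lemma quadForm_upper {d : ℕ} (Q : Matrix (Fin d) (Fin d) ℝ) (x : EucSp d) :
    quadForm Q x ≤ (∑ i, ∑ j, |Q i j|) * ‖x‖ ^ 2 := by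
  rw [Finset.sum_mul]
  refine Finset.sum_le_sum fun i _ => ?_
  rw [Finset.sum_mul]
  refine Finset.sum_le_sum fun j _ => ?_
  calc x i * (Q i j * x j) ≤ |x i * (Q i j * x j)| := le_abs_self _
    _ = |x i| * (|Q i j| * |x j|) := by rw [abs_mul, abs_mul]
    _ ≤ ‖x‖ * (|Q i j| * ‖x‖) := by
        exact mul_le_mul (abs_apply_le_norm x i)
          (mul_le_mul_of_nonneg_left (abs_apply_le_norm x j) (abs_nonneg _))
          (by positivity) (norm_nonneg x)
    _ = |Q i j| * ‖x‖ ^ 2 := by ring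

theorem stmt2 (d : ℕ) (hd : 1 ≤ d) (m : ℝ) (hm : 1 ≤ m)
    (ℓ : EucSp d) (R Γ Q : Matrix (Fin d) (Fin d) ℝ)
    (hQsymm : Q.IsSymm) (hQpos : Q.PosDef) :
    ∀ δ : ℝ, 0 < δ → ∃ κ₂ : ℝ, 0 < κ₂ ∧
      ∀ (u x : EucSp d), u ∈ simplex d → 1 ≤ ‖x‖ →
        δ * ‖x‖ < max (∑ i, x i) 0 →
        ∑ i, pd1 (Vq Q m) i x * qdrift ℓ R Γ x u i ≤
          κ₂ * (1 + (max (∑ i, x i) 0) ^ m) := by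
  intro δ hδ
  obtain ⟨c, hc, hlow⟩ := quadForm_lower hd Q hQpos
  set C : ℝ := ∑ i, ∑ j, |Q i j| with hCdef
  set K : ℝ := max (c ^ (m / 2 - 1)) (C ^ (m / 2 - 1)) with hKdef
  set A : Fin d → ℝ := fun i => ∑ j, (|Q i j| + |Q j i|) with hAdef
  set B : Fin d → ℝ := fun i =>
    |ℓ i| + (1 + d) * (∑ j, |R i j|) + d * (∑ j, |Γ i j|) with hBdef
  set S : ℝ := ∑ i, A i * B i with hSdef
  have hm0 : (0:ℝ) ≤ m / 2 := by linarith
  have hK0 : 0 ≤ K := le_trans (Real.rpow_nonneg hc.le _) (le_max_left _ _)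
  have hA0 : ∀ i, 0 ≤ A i := fun i =>
    Finset.sum_nonneg fun j _ => add_nonneg (abs_nonneg _) (abs_nonneg _)
  have hB0 : ∀ i, 0 ≤ B i := fun i => by
    rw [hBdef]; positivity
  have hS0 : 0 ≤ S := Finset.sum_nonneg fun i _ => mul_nonneg (hA0 i) (hB0 i)
  set M : ℝ := m / 2 * K * S with hMdef
  have hM0 : 0 ≤ M := mul_nonneg (mul_nonneg hm0 hK0) hS0
  have hδm : 0 < δ ^ m := Real.rpow_pos_of_pos hδ m
  refine ⟨M / δ ^ m + 1, by positivity, ?_⟩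
  intro u x hu hx hδx
  set s := max (∑ i, x i) 0 with hsdef
  have hs0 : 0 ≤ s := le_max_right _ _
  have hnx : (0:ℝ) < ‖x‖ := lt_of_lt_of_le one_pos hx
  have hqpos : 0 < quadForm Q x := lt_of_lt_of_le (by positivity) (hlow x)
  set σ : ℝ := m / 2 * quadForm Q x ^ (m / 2 - 1) with hσdef
  have hσ0 : 0 ≤ σ := mul_nonneg hm0 (Real.rpow_nonneg hqpos.le _)
  -- per-term bound
  have key : ∀ i, pd1 (Vq Q m) i x * qdrift ℓ R Γ x u i
      ≤ σ * (A i * B i * ‖x‖ ^ 2) := by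
    intro i
    rw [pd1_Vq Q m x hqpos.ne' i, mul_assoc]
    refine mul_le_mul_of_nonneg_left ?_ hσ0
    have hDq : |qderiv Q x (EuclideanSpace.single i 1)| ≤ A i * ‖x‖ := by
      rw [qderiv_single, hAdef, Finset.sum_mul]
      calc |∑ j, (Q i j * x j + x j * Q j i)| ≤ ∑ j, |Q i j * x j + x j * Q j i| :=
            Finset.abs_sum_le_sum_abs _ _
        _ ≤ ∑ j, (|Q i j| + |Q j i|) * ‖x‖ := by
            refine Finset.sum_le_sum fun j _ => ?_
            calc |Q i j * x j + x j * Q j i| ≤ |Q i j * x j| + |x j * Q j i| := abs_add_le _ _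
              _ = |Q i j| * |x j| + |x j| * |Q j i| := by rw [abs_mul, abs_mul]
              _ ≤ (|Q i j| + |Q j i|) * ‖x‖ := by
                  have h1 := abs_apply_le_norm x j
                  have := abs_nonneg (x j); have := abs_nonneg (Q i j)
                  have := abs_nonneg (Q j i)
                  nlinarith
    have hb := qdrift_bound ℓ R Γ u x hu hx i
    calc qderiv Q x (EuclideanSpace.single i 1) * qdrift ℓ R Γ x u i
        ≤ |qderiv Q x (EuclideanSpace.single i 1)| * |qdrift ℓ R Γ x u i| := by
          rw [← abs_mul]; exact le_abs_self _
      _ ≤ (A i * ‖x‖) * (B i * ‖x‖) := by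
          refine mul_le_mul hDq hb (abs_nonneg _) ?_
          exact mul_nonneg (hA0 i) (norm_nonneg x)
      _ = A i * B i * ‖x‖ ^ 2 := by ring
  have hsum : ∑ i, pd1 (Vq Q m) i x * qdrift ℓ R Γ x u i ≤ σ * (S * ‖x‖ ^ 2) := by
    calc ∑ i, pd1 (Vq Q m) i x * qdrift ℓ R Γ x u i
        ≤ ∑ i, σ * (A i * B i * ‖x‖ ^ 2) := Finset.sum_le_sum fun i _ => key i
      _ = σ * (S * ‖x‖ ^ 2) := by
          rw [← Finset.mul_sum, hSdef, Finset.sum_mul]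
  -- bound σ
  have hx2 : (‖x‖ : ℝ) ^ (2:ℕ) = ‖x‖ ^ ((2:ℝ)) := by
    rw [← Real.rpow_natCast ‖x‖ 2]; norm_num
  have hrw : ∀ a : ℝ, 0 ≤ a → (a * ‖x‖ ^ 2) ^ (m / 2 - 1)
      = a ^ (m / 2 - 1) * ‖x‖ ^ (m - 2) := by
    intro a ha
    rw [Real.mul_rpow ha (by positivity), hx2, ← Real.rpow_mul (norm_nonneg x)]
    have h2 : 2 * (m / 2 - 1) = m - 2 := by ring
    rw [h2]
  have hσK : quadForm Q x ^ (m / 2 - 1) ≤ K * ‖x‖ ^ (m - 2) := by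
    rcases le_or_gt 0 (m / 2 - 1) with ht | ht
    · have hupp : quadForm Q x ≤ C * ‖x‖ ^ 2 := quadForm_upper Q x
      calc quadForm Q x ^ (m / 2 - 1) ≤ (C * ‖x‖ ^ 2) ^ (m / 2 - 1) :=
            Real.rpow_le_rpow hqpos.le hupp ht
        _ = C ^ (m / 2 - 1) * ‖x‖ ^ (m - 2) := by
            have hC0 : 0 ≤ C := Finset.sum_nonneg fun i _ =>
              Finset.sum_nonneg fun j _ => abs_nonneg _
            exact hrw C hC0
        _ ≤ K * ‖x‖ ^ (m - 2) := by
            refine mul_le_mul_of_nonneg_right (le_max_right _ _) ?_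
            positivity
    · have hlx := hlow x
      have hcx : (0:ℝ) < c * ‖x‖ ^ 2 := by positivity
      calc quadForm Q x ^ (m / 2 - 1) ≤ (c * ‖x‖ ^ 2) ^ (m / 2 - 1) :=
            Real.rpow_le_rpow_of_nonpos hcx hlx ht.le
        _ = c ^ (m / 2 - 1) * ‖x‖ ^ (m - 2) := hrw c hc.le
        _ ≤ K * ‖x‖ ^ (m - 2) := by
            refine mul_le_mul_of_nonneg_right (le_max_left _ _) ?_
            positivity
  have hxm : ‖x‖ ^ (m - 2) * ‖x‖ ^ 2 = ‖x‖ ^ m := by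
    rw [hx2, ← Real.rpow_add hnx]
    have h2 : m - 2 + 2 = m := by ring
    rw [h2]
  have hbig : ∑ i, pd1 (Vq Q m) i x * qdrift ℓ R Γ x u i ≤ M * ‖x‖ ^ m := by
    calc ∑ i, pd1 (Vq Q m) i x * qdrift ℓ R Γ x u i ≤ σ * (S * ‖x‖ ^ 2) := hsum
      _ ≤ (m / 2 * (K * ‖x‖ ^ (m - 2))) * (S * ‖x‖ ^ 2) := by
          refine mul_le_mul_of_nonneg_right ?_ (by positivity)
          exact mul_le_mul_of_nonneg_left hσK hm0
      _ = M * (‖x‖ ^ (m - 2) * ‖x‖ ^ 2) := by ring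
      _ = M * ‖x‖ ^ m := by rw [hxm]
  have hxs : ‖x‖ ^ m ≤ s ^ m / δ ^ m := by
    rw [← Real.div_rpow hs0 hδ.le]
    refine Real.rpow_le_rpow (norm_nonneg x) ?_ (by linarith)
    rw [le_div_iff₀ hδ]
    linarith
  have hsm0 : 0 ≤ s ^ m := Real.rpow_nonneg hs0 m
  calc ∑ i, pd1 (Vq Q m) i x * qdrift ℓ R Γ x u i ≤ M * ‖x‖ ^ m := hbig
    _ ≤ M * (s ^ m / δ ^ m) := mul_le_mul_of_nonneg_left hxs hM0
    _ = (M / δ ^ m) * s ^ m := by ring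
    _ ≤ (M / δ ^ m + 1) * (1 + s ^ m) := by
        have h0 : 0 ≤ M / δ ^ m := div_nonneg hM0 hδm.le
        nlinarith
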